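/- arXiv:1206.0566 — 3 statements merged into one kernel-verified Lean document; each statement's English description precedes it below -/
import Mathlib

section
/- For fixed u ∈ (−π, π] and v ∈ [−π/2, π/2], the curve γ(τ) = (x(τ), y(τ), z(τ)) with x(τ) = e^{τ sin v} cos(τ cos v), y(τ) = e^{τ sin v} sin(τ cos v) cos u, z(τ) = e^{τ sin v} sin(τ cos v) sin u is parametrized by arc length with respect to the metric ds² = (dx² + dy² + dz²)/(x² + y² + z²); that is, (x'(τ)² + y'(τ)² + z'(τ)²)/(x(τ)² + y(τ)² + z(τ)²) = 1 for all τ. -/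
/-!
STATEMENT 4: For fixed u ∈ (−π, π] and v ∈ [−π/2, π/2], the curve
x(τ) = e^{τ sin v} cos(τ cos v), y(τ) = e^{τ sin v} sin(τ cos v) cos u,
z(τ) = e^{τ sin v} sin(τ cos v) sin u is parametrized by arc length for the
metric ds² = (dx² + dy² + dz²)/(x² + y² + z²):
(x'² + y'² + z'²)/(x² + y² + z²) = 1 for all τ.
-/

noncomputable section
open Real

theorem stmt4 (u v : ℝ) (hu : u ∈ Set.Ioc (-π) π)
    (hv : v ∈ Set.Icc (-(π/2)) (π/2)) (τ : ℝ) :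
    let x : ℝ → ℝ := fun τ => exp (τ * sin v) * cos (τ * cos v)
    let y : ℝ → ℝ := fun τ => exp (τ * sin v) * sin (τ * cos v) * cos u
    let z : ℝ → ℝ := fun τ => exp (τ * sin v) * sin (τ * cos v) * sin u
    ((deriv x τ) ^ 2 + (deriv y τ) ^ 2 + (deriv z τ) ^ 2) /
        ((x τ) ^ 2 + (y τ) ^ 2 + (z τ) ^ 2) = 1 := by
  intro x y z
  have h1 : HasDerivAt (fun t : ℝ => t * sin v) (sin v) τ :=
    (hasDerivAt_id τ).mul_const _ |>.congr_deriv (by ring)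
  have h2 : HasDerivAt (fun t : ℝ => t * cos v) (cos v) τ :=
    (hasDerivAt_id τ).mul_const _ |>.congr_deriv (by ring)
  have hE : HasDerivAt (fun t : ℝ => exp (t * sin v))
      (exp (τ * sin v) * sin v) τ := by
    simpa using h1.exp
  have hC : HasDerivAt (fun t : ℝ => cos (t * cos v))
      (-sin (τ * cos v) * cos v) τ := by
    simpa using h2.cos
  have hS : HasDerivAt (fun t : ℝ => sin (t * cos v))
      (cos (τ * cos v) * cos v) τ := by
    simpa using h2.sin
  have hx : HasDerivAt x
      (exp (τ * sin v) * sin v * cos (τ * cos v) +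
        exp (τ * sin v) * (-sin (τ * cos v) * cos v)) τ := hE.mul hC
  have hy : HasDerivAt y
      ((exp (τ * sin v) * sin v * sin (τ * cos v) +
        exp (τ * sin v) * (cos (τ * cos v) * cos v)) * cos u) τ :=
    (hE.mul hS).mul_const _
  have hz : HasDerivAt z
      ((exp (τ * sin v) * sin v * sin (τ * cos v) +
        exp (τ * sin v) * (cos (τ * cos v) * cos v)) * sin u) τ :=
    (hE.mul hS).mul_const _
  rw [hx.deriv, hy.deriv, hz.deriv]
  have hsu := sin_sq_add_cos_sq u
  have hsv := sin_sq_add_cos_sq v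
  have hst := sin_sq_add_cos_sq (τ * cos v)
  have hE0 : exp (τ * sin v) ≠ 0 := (exp_pos _).ne'
  have hE2 : exp (τ * sin v) ^ 2 > 0 := by positivity
  simp only [x, y, z]
  have hnum : (exp (τ * sin v) * sin v * cos (τ * cos v) +
        exp (τ * sin v) * (-sin (τ * cos v) * cos v)) ^ 2 +
      ((exp (τ * sin v) * sin v * sin (τ * cos v) +
        exp (τ * sin v) * (cos (τ * cos v) * cos v)) * cos u) ^ 2 +
      ((exp (τ * sin v) * sin v * sin (τ * cos v) +
        exp (τ * sin v) * (cos (τ * cos v) * cos v)) * sin u) ^ 2 =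
      exp (τ * sin v) ^ 2 := by
    linear_combination (exp (τ * sin v) * sin v * sin (τ * cos v) +
        exp (τ * sin v) * (cos (τ * cos v) * cos v)) ^ 2 * hsu +
      exp (τ * sin v) ^ 2 * (sin (τ * cos v) ^ 2 + cos (τ * cos v) ^ 2) * hsv +
      exp (τ * sin v) ^ 2 * hst
  have hden : (exp (τ * sin v) * cos (τ * cos v)) ^ 2 +
      (exp (τ * sin v) * sin (τ * cos v) * cos u) ^ 2 +
      (exp (τ * sin v) * sin (τ * cos v) * sin u) ^ 2 = exp (τ * sin v) ^ 2 := by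
    linear_combination (exp (τ * sin v) * sin (τ * cos v)) ^ 2 * hsu +
      exp (τ * sin v) ^ 2 * hst
  rw [hnum, hden, div_self (by positivity)]

end
end

section
/- The volume of the geodesic ball B(ρ) of radius ρ ∈ [0, π] in S²×ℝ equals Vol(B(ρ)) = 2π ∫₀^ρ ∫_{−π/2}^{π/2} τ · sin(τ cos v) dv dτ (where the integrand τ·sin(τ cos v) is nonnegative on the domain since 0 ≤ τ cos v ≤ π). -/
/-!
STATEMENT 6: The volume of the geodesic ball B(ρ), ρ ∈ [0, π], in S²×ℝ
(modelled in ℝ³ \ {0} with volume form (x²+y²+z²)^{-3/2} dx dy dz, the ball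
being the image of {0 ≤ τ ≤ ρ} × {−π/2 ≤ v ≤ π/2} × {−π < u ≤ π} under the
geodesic polar coordinate map) equals
2π ∫₀^ρ ∫_{−π/2}^{π/2} τ · sin(τ cos v) dv dτ.
-/

noncomputable section
open Real MeasureTheory

/-- Geodesic polar coordinates about (1,0,0). -/
def polarMap (p : ℝ × ℝ × ℝ) : ℝ × ℝ × ℝ :=
  (exp (p.1 * sin p.2.1) * cos (p.1 * cos p.2.1),
   exp (p.1 * sin p.2.1) * sin (p.1 * cos p.2.1) * cos p.2.2,
   exp (p.1 * sin p.2.1) * sin (p.1 * cos p.2.1) * sin p.2.2)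

/-- The geodesic ball of radius ρ centred at (1,0,0), in the model. -/
def geoBall (ρ : ℝ) : Set (ℝ × ℝ × ℝ) :=
  polarMap '' (Set.Icc 0 ρ ×ˢ Set.Icc (-(π/2)) (π/2) ×ˢ Set.Ioc (-π) π)

def e3 : (ℝ × ℝ × ℝ) ≃ₗ[ℝ] (Fin 3 → ℝ) where
  toFun p := ![p.1, p.2.1, p.2.2]
  invFun f := (f 0, f 1, f 2)
  map_add' p q := by funext i; fin_cases i <;> simp
  map_smul' c p := by funext i; fin_cases i <;> simp
  left_inv p := rfl
  right_inv f := by funext i; fin_cases i <;> rfl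

def b3 : Module.Basis (Fin 3) ℝ (ℝ × ℝ × ℝ) := Module.Basis.ofEquivFun e3

lemma e3_apply' (x : ℝ × ℝ × ℝ) : e3 x = ![x.1, x.2.1, x.2.2] := rfl

lemma e3_symm_apply' (f : Fin 3 → ℝ) : e3.symm f = (f 0, f 1, f 2) := rfl

lemma toLin_b3_apply (M : Matrix (Fin 3) (Fin 3) ℝ) (x : ℝ × ℝ × ℝ) :
    Matrix.toLin b3 b3 M x =
      (M 0 0 * x.1 + M 0 1 * x.2.1 + M 0 2 * x.2.2,
       M 1 0 * x.1 + M 1 1 * x.2.1 + M 1 2 * x.2.2,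
       M 2 0 * x.1 + M 2 1 * x.2.1 + M 2 2 * x.2.2) := by
  simp [Matrix.toLin_apply, b3, Fin.sum_univ_three, e3_apply', e3_symm_apply', Matrix.mulVec,
    Module.Basis.ofEquivFun, Matrix.vecHead, Matrix.vecTail, add_assoc, mul_comm]

/-- Jacobian matrix of `polarMap`. -/
def jmat (p : ℝ × ℝ × ℝ) : Matrix (Fin 3) (Fin 3) ℝ :=
  let τ := p.1; let v := p.2.1; let u := p.2.2
  let E := exp (τ * sin v); let φ := τ * cos v
  !![E * sin v * cos φ - E * cos v * sin φ,
     E * (τ * cos v) * cos φ + E * (τ * sin v) * sin φ, 0;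
     (E * sin v * sin φ + E * cos v * cos φ) * cos u,
     (E * (τ * cos v) * sin φ - E * (τ * sin v) * cos φ) * cos u,
     -(E * sin φ * sin u);
     (E * sin v * sin φ + E * cos v * cos φ) * sin u,
     (E * (τ * cos v) * sin φ - E * (τ * sin v) * cos φ) * sin u,
     E * sin φ * cos u]

def jder (p : ℝ × ℝ × ℝ) : (ℝ × ℝ × ℝ) →L[ℝ] (ℝ × ℝ × ℝ) :=
  LinearMap.toContinuousLinearMap (Matrix.toLin b3 b3 (jmat p))

lemma jder_det (p : ℝ × ℝ × ℝ) :
    (jder p).det = -(exp (p.1 * sin p.2.1)) ^ 3 * p.1 * sin (p.1 * cos p.2.1) := by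
  obtain ⟨τ, v, u⟩ := p
  simp only [jder, jmat, LinearMap.det_toContinuousLinearMap, LinearMap.det_toLin]
  rw [Matrix.det_fin_three]
  simp only [Matrix.cons_val', Matrix.cons_val_zero, Matrix.cons_val_one, Matrix.head_cons,
    Matrix.empty_val', Matrix.cons_val_fin_one, Matrix.head_fin_const, Matrix.of_apply,
    Matrix.cons_val_two, Matrix.tail_cons]
  linear_combination
    (-(exp (τ * sin v)) ^ 3 * τ * sin (τ * cos v) * (sin v ^ 2 + cos v ^ 2)) *
      (sin_sq_add_cos_sq u) +
    (-(exp (τ * sin v)) ^ 3 * τ * sin (τ * cos v)) * (sin_sq_add_cos_sq v) +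
    (-(exp (τ * sin v)) ^ 3 * τ * sin (τ * cos v) * (sin u ^ 2 + cos u ^ 2) *
      (sin v ^ 2 + cos v ^ 2)) * (sin_sq_add_cos_sq (τ * cos v))

lemma hasFDerivAt_polarMap (p : ℝ × ℝ × ℝ) : HasFDerivAt polarMap (jder p) p := by
  have hτ : HasFDerivAt (fun q : ℝ × ℝ × ℝ => q.1)
      (ContinuousLinearMap.fst ℝ ℝ (ℝ × ℝ)) p := hasFDerivAt_fst
  have hv : HasFDerivAt (fun q : ℝ × ℝ × ℝ => q.2.1)
      ((ContinuousLinearMap.fst ℝ ℝ ℝ).comp (ContinuousLinearMap.snd ℝ ℝ (ℝ × ℝ))) p :=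
    hasFDerivAt_fst.comp p hasFDerivAt_snd
  have hu : HasFDerivAt (fun q : ℝ × ℝ × ℝ => q.2.2)
      ((ContinuousLinearMap.snd ℝ ℝ ℝ).comp (ContinuousLinearMap.snd ℝ ℝ (ℝ × ℝ))) p :=
    hasFDerivAt_snd.comp p hasFDerivAt_snd
  have hE : HasFDerivAt (fun q : ℝ × ℝ × ℝ => exp (q.1 * sin q.2.1)) _ p :=
    (hτ.mul hv.sin).exp
  have hC : HasFDerivAt (fun q : ℝ × ℝ × ℝ => cos (q.1 * cos q.2.1)) _ p :=
    (hτ.mul hv.cos).cos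
  have hS : HasFDerivAt (fun q : ℝ × ℝ × ℝ => sin (q.1 * cos q.2.1)) _ p :=
    (hτ.mul hv.cos).sin
  have h := (hE.mul hC).prodMk (((hE.mul hS).mul hu.cos).prodMk ((hE.mul hS).mul hu.sin))
  refine h.congr_fderiv ?_
  symm
  refine ContinuousLinearMap.ext fun x => ?_
  obtain ⟨τ, v, u⟩ := p
  obtain ⟨a, b, c⟩ := x
  simp only [jder, jmat, LinearMap.coe_toContinuousLinearMap', toLin_b3_apply,
    Matrix.cons_val', Matrix.cons_val_zero, Matrix.cons_val_one, Matrix.head_cons,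
    Matrix.empty_val', Matrix.cons_val_fin_one, Matrix.head_fin_const, Matrix.of_apply,
    Matrix.cons_val_two, Matrix.tail_cons, ContinuousLinearMap.prod_apply,
    ContinuousLinearMap.add_apply, ContinuousLinearMap.smul_apply,
    ContinuousLinearMap.coe_comp', Function.comp_apply, ContinuousLinearMap.coe_fst',
    ContinuousLinearMap.coe_snd', smul_eq_mul, neg_mul]
  refine Prod.ext ?_ (Prod.ext ?_ ?_) <;> simp <;> ring

set_option maxHeartbeats 1000000 in
lemma injOn_polarMap {ρ : ℝ} (hρπ : ρ ≤ π) :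
    Set.InjOn polarMap (Set.Ioo 0 ρ ×ˢ Set.Ioo (-(π/2)) (π/2) ×ˢ Set.Ioo (-π) π) := by
  rintro ⟨τ, v, u⟩ ⟨hτ, hv, hu⟩ ⟨τ', v', u'⟩ ⟨hτ', hv', hu'⟩ h
  simp only [Set.mem_Ioo, Set.mem_prod] at hτ hv hu hτ' hv' hu'
  have hcv : 0 < cos v := Real.cos_pos_of_mem_Ioo ⟨hv.1, hv.2⟩
  have hcv' : 0 < cos v' := Real.cos_pos_of_mem_Ioo ⟨hv'.1, hv'.2⟩
  have hφ0 : 0 < τ * cos v := mul_pos hτ.1 hcv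
  have hφ0' : 0 < τ' * cos v' := mul_pos hτ'.1 hcv'
  have hφπ : τ * cos v < π :=
    lt_of_le_of_lt (mul_le_of_le_one_right hτ.1.le (Real.cos_le_one v))
      (lt_of_lt_of_le hτ.2 hρπ)
  have hφπ' : τ' * cos v' < π :=
    lt_of_le_of_lt (mul_le_of_le_one_right hτ'.1.le (Real.cos_le_one v'))
      (lt_of_lt_of_le hτ'.2 hρπ)
  have hsφ : 0 < sin (τ * cos v) := Real.sin_pos_of_pos_of_lt_pi hφ0 hφπ
  have hsφ' : 0 < sin (τ' * cos v') := Real.sin_pos_of_pos_of_lt_pi hφ0' hφπ'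
  obtain ⟨h1, h2, h3⟩ :
      exp (τ * sin v) * cos (τ * cos v) = exp (τ' * sin v') * cos (τ' * cos v') ∧
      exp (τ * sin v) * sin (τ * cos v) * cos u
        = exp (τ' * sin v') * sin (τ' * cos v') * cos u' ∧
      exp (τ * sin v) * sin (τ * cos v) * sin u
        = exp (τ' * sin v') * sin (τ' * cos v') * sin u' := by
    simpa [polarMap, Prod.ext_iff] using h
  have hEpos : (0:ℝ) < exp (τ * sin v) := Real.exp_pos _
  have hEpos' : (0:ℝ) < exp (τ' * sin v') := Real.exp_pos _
  have hsq : exp (τ * sin v) ^ 2 = exp (τ' * sin v') ^ 2 := by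
    linear_combination exp (τ * sin v) * cos (τ * cos v) * h1 +
      exp (τ * sin v) * sin (τ * cos v) * cos u * h2 +
      exp (τ * sin v) * sin (τ * cos v) * sin u * h3 +
      cos (τ' * cos v') * exp (τ' * sin v') * h1 +
      sin (τ' * cos v') * cos u' * exp (τ' * sin v') * h2 +
      sin (τ' * cos v') * sin u' * exp (τ' * sin v') * h3 +
      (- exp (τ * sin v) ^ 2) * sin_sq_add_cos_sq (τ * cos v) +
      (- exp (τ * sin v) ^ 2 * sin (τ * cos v) ^ 2) * sin_sq_add_cos_sq u +
      (exp (τ' * sin v') ^ 2) * sin_sq_add_cos_sq (τ' * cos v') +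
      (exp (τ' * sin v') ^ 2 * sin (τ' * cos v') ^ 2) * sin_sq_add_cos_sq u'
  have hEE : exp (τ * sin v) = exp (τ' * sin v') := by
    apply le_antisymm <;> nlinarith [hEpos, hEpos', hsq]
  have hts : τ * sin v = τ' * sin v' := Real.exp_injective hEE
  have hcφ : cos (τ * cos v) = cos (τ' * cos v') := by
    rw [hEE] at h1; exact mul_left_cancel₀ hEpos'.ne' h1
  have hφφ : τ * cos v = τ' * cos v' :=
    Real.injOn_cos ⟨hφ0.le, hφπ.le⟩ ⟨hφ0'.le, hφπ'.le⟩ hcφ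
  have hsφeq : sin (τ * cos v) = sin (τ' * cos v') := by rw [hφφ]
  have hττ : τ = τ' := by
    have hτsq : τ ^ 2 = τ' ^ 2 := by
      linear_combination (τ * sin v + τ' * sin v') * hts +
        (τ * cos v + τ' * cos v') * hφφ - τ ^ 2 * sin_sq_add_cos_sq v +
        τ' ^ 2 * sin_sq_add_cos_sq v'
    apply le_antisymm <;> nlinarith [hτ.1, hτ'.1, hτsq]
  have hvv : v = v' := by
    have hsv : sin v = sin v' := by
      rw [hττ] at hts
      exact mul_left_cancel₀ (ne_of_gt (hττ ▸ hτ.1)) hts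
    exact Real.injOn_sin ⟨hv.1.le, hv.2.le⟩ ⟨hv'.1.le, hv'.2.le⟩ hsv
  have hcu : cos u = cos u' := by
    rw [hEE, hsφeq] at h2
    exact mul_left_cancel₀ (ne_of_gt (mul_pos hEpos' hsφ')) h2
  have hsu : sin u = sin u' := by
    rw [hEE, hsφeq] at h3
    exact mul_left_cancel₀ (ne_of_gt (mul_pos hEpos' hsφ')) h3
  have huu : u = u' := by
    rw [← Complex.arg_cos_add_sin_mul_I ⟨hu.1, hu.2.le⟩,
        ← Complex.arg_cos_add_sin_mul_I ⟨hu'.1, hu'.2.le⟩]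
    simp only [← Complex.ofReal_cos, ← Complex.ofReal_sin, hcu, hsu]
  rw [hττ, hvv, huu]

instance : Measure.IsAddHaarMeasure (volume : Measure (ℝ × ℝ × ℝ)) :=
  Measure.prod.instIsAddHaarMeasure _ _

theorem stmt6 (ρ : ℝ) (hρ0 : 0 ≤ ρ) (hρπ : ρ ≤ π) :
    (∫ p in geoBall ρ, (p.1 ^ 2 + p.2.1 ^ 2 + p.2.2 ^ 2) ^ (-(3 : ℝ) / 2)) =
      2 * π * ∫ τ in (0 : ℝ)..ρ, ∫ v in (-(π/2))..(π/2), τ * sin (τ * cos v) := by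
  have pi_pos := Real.pi_pos
  set g : ℝ × ℝ × ℝ → ℝ := fun p => (p.1 ^ 2 + p.2.1 ^ 2 + p.2.2 ^ 2) ^ (-(3 : ℝ) / 2) with hg
  set S : Set (ℝ × ℝ × ℝ) := Set.Icc 0 ρ ×ˢ Set.Icc (-(π/2)) (π/2) ×ˢ Set.Ioc (-π) π with hS
  set T : Set (ℝ × ℝ × ℝ) := Set.Ioo 0 ρ ×ˢ Set.Ioo (-(π/2)) (π/2) ×ˢ Set.Ioo (-π) π with hT
  have hTsub : T ⊆ S :=
    Set.prod_mono Set.Ioo_subset_Icc_self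
      (Set.prod_mono Set.Ioo_subset_Icc_self Set.Ioo_subset_Ioc_self)
  have hTmeas : MeasurableSet T :=
    measurableSet_Ioo.prod (measurableSet_Ioo.prod measurableSet_Ioo)
  -- the boundary has measure zero
  have hSTnull : volume (S \ T) = 0 := by
    have h1 : volume S = ENNReal.ofReal (ρ - 0) *
        (ENNReal.ofReal (π/2 - -(π/2)) * ENNReal.ofReal (π - -π)) := by
      rw [hS, Measure.volume_eq_prod, Measure.prod_prod, Measure.volume_eq_prod,
        Measure.prod_prod, Real.volume_Icc, Real.volume_Icc, Real.volume_Ioc]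
    have h2 : volume T = ENNReal.ofReal (ρ - 0) *
        (ENNReal.ofReal (π/2 - -(π/2)) * ENNReal.ofReal (π - -π)) := by
      rw [hT, Measure.volume_eq_prod, Measure.prod_prod, Measure.volume_eq_prod,
        Measure.prod_prod, Real.volume_Ioo, Real.volume_Ioo, Real.volume_Ioo]
    rw [measure_diff hTsub hTmeas.nullMeasurableSet (by rw [h2]; finiteness), h1, h2,
      tsub_self]
  have himgnull : volume (polarMap '' (S \ T)) = 0 :=
    addHaar_image_eq_zero_of_differentiableOn_of_addHaar_eq_zero volume
      (fun p _ => (hasFDerivAt_polarMap p).differentiableAt.differentiableWithinAt) hSTnull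
  have hae : polarMap '' S =ᵐ[volume] polarMap '' T := by
    rw [ae_eq_set]
    refine ⟨measure_mono_null (Set.subset_image_diff polarMap S T) himgnull, ?_⟩
    rw [Set.diff_eq_empty.2 (Set.image_mono hTsub)]
    simp
  have hgeo : geoBall ρ = polarMap '' S := by rw [hS]; rfl
  rw [hgeo]
  calc
    ∫ p in polarMap '' S, g p = ∫ p in polarMap '' T, g p := setIntegral_congr_set hae
    _ = ∫ p in T, |(jder p).det| • g (polarMap p) :=
        integral_image_eq_integral_abs_det_fderiv_smul volume hTmeas
          (fun p _ => (hasFDerivAt_polarMap p).hasFDerivWithinAt) (injOn_polarMap hρπ) g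
    _ = ∫ p in T, p.1 * sin (p.1 * cos p.2.1) := by
        apply setIntegral_congr_fun hTmeas
        rintro ⟨τ, v, u⟩ ⟨hτ, hv, hu⟩
        simp only [Set.mem_Ioo] at hτ hv hu
        have hcv : 0 < cos v := Real.cos_pos_of_mem_Ioo ⟨hv.1, hv.2⟩
        have hφ0 : 0 < τ * cos v := mul_pos hτ.1 hcv
        have hφπ : τ * cos v < π :=
          lt_of_le_of_lt (mul_le_of_le_one_right hτ.1.le (Real.cos_le_one v))
            (lt_of_lt_of_le hτ.2 hρπ)
        have hsφ : 0 < sin (τ * cos v) := Real.sin_pos_of_pos_of_lt_pi hφ0 hφπ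
        have hEpos : (0:ℝ) < exp (τ * sin v) := Real.exp_pos _
        have hdet : |(jder (τ, v, u)).det| = exp (τ * sin v) ^ 3 * τ * sin (τ * cos v) := by
          rw [jder_det]
          dsimp only
          rw [abs_of_nonpos (by nlinarith [mul_pos (mul_pos (pow_pos hEpos 3) hτ.1) hsφ])]
          ring
        have hsum : ((polarMap (τ, v, u)).1 ^ 2 + (polarMap (τ, v, u)).2.1 ^ 2 +
            (polarMap (τ, v, u)).2.2 ^ 2) = exp (τ * sin v) ^ 2 := by
          simp only [polarMap]
          linear_combination (exp (τ * sin v) ^ 2) * sin_sq_add_cos_sq (τ * cos v) +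
            (exp (τ * sin v) ^ 2 * sin (τ * cos v) ^ 2) * sin_sq_add_cos_sq u
        have hgval : g (polarMap (τ, v, u)) = (exp (τ * sin v) ^ 3)⁻¹ := by
          rw [hg]
          simp only
          rw [hsum, ← Real.rpow_natCast (exp (τ * sin v)) 2, ← Real.rpow_mul hEpos.le,
            show ((2:ℕ):ℝ) * (-(3:ℝ)/2) = ((-3 : ℤ) : ℝ) by norm_num,
            Real.rpow_intCast]
          rw [zpow_neg, zpow_ofNat]
        show |(jder (τ, v, u)).det| • g (polarMap (τ, v, u)) = τ * sin (τ * cos v)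
        rw [hdet, hgval, smul_eq_mul]
        field_simp
    _ = ∫ τ in Set.Ioo (0:ℝ) ρ, ∫ q in Set.Ioo (-(π/2)) (π/2) ×ˢ Set.Ioo (-π) π,
          τ * sin (τ * cos q.1) := by
        have hcont : Continuous fun p : ℝ × ℝ × ℝ => p.1 * sin (p.1 * cos p.2.1) := by
          fun_prop
        have hint1 : IntegrableOn (fun p : ℝ × ℝ × ℝ => p.1 * sin (p.1 * cos p.2.1))
            (Set.Ioo 0 ρ ×ˢ Set.Ioo (-(π/2)) (π/2) ×ˢ Set.Ioo (-π) π)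
            ((volume : Measure ℝ).prod (volume : Measure (ℝ × ℝ))) := by
          have := (hcont.continuousOn.integrableOn_compact (μ := volume)
              (isCompact_Icc.prod (isCompact_Icc.prod isCompact_Icc))
              (K := Set.Icc 0 ρ ×ˢ Set.Icc (-(π/2)) (π/2) ×ˢ Set.Icc (-π) π)).mono_set
            (Set.prod_mono Set.Ioo_subset_Icc_self
              (Set.prod_mono Set.Ioo_subset_Icc_self Set.Ioo_subset_Icc_self))
          rwa [Measure.volume_eq_prod] at this
        rw [hT, Measure.volume_eq_prod]
        exact setIntegral_prod _ hint1
    _ = ∫ τ in Set.Ioo (0:ℝ) ρ, 2 * π * ∫ v in Set.Ioo (-(π/2)) (π/2),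
          τ * sin (τ * cos v) := by
        refine setIntegral_congr_fun measurableSet_Ioo fun τ _ => ?_
        have hint2 : IntegrableOn (fun q : ℝ × ℝ => τ * sin (τ * cos q.1))
            (Set.Ioo (-(π/2)) (π/2) ×ˢ Set.Ioo (-π) π)
            ((volume : Measure ℝ).prod (volume : Measure ℝ)) := by
          have hc : Continuous fun q : ℝ × ℝ => τ * sin (τ * cos q.1) := by fun_prop
          have := (hc.continuousOn.integrableOn_compact (μ := volume)
              (isCompact_Icc.prod isCompact_Icc)
              (K := Set.Icc (-(π/2)) (π/2) ×ˢ Set.Icc (-π) π)).mono_set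
            (Set.prod_mono Set.Ioo_subset_Icc_self Set.Ioo_subset_Icc_self)
          rwa [Measure.volume_eq_prod] at this
        rw [Measure.volume_eq_prod, setIntegral_prod _ hint2]
        have hconst : ∀ v : ℝ, ∫ _ in Set.Ioo (-π) π, τ * sin (τ * cos v) =
            2 * π * (τ * sin (τ * cos v)) := fun v => by
          rw [setIntegral_const, Real.volume_real_Ioo_of_le (by linarith), smul_eq_mul]
          ring
        simp_rw [hconst]
        rw [MeasureTheory.integral_const_mul]
    _ = 2 * π * ∫ τ in Set.Ioo (0:ℝ) ρ, ∫ v in Set.Ioo (-(π/2)) (π/2),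
          τ * sin (τ * cos v) := MeasureTheory.integral_const_mul _ _
    _ = 2 * π * ∫ τ in (0:ℝ)..ρ, ∫ v in (-(π/2))..(π/2), τ * sin (τ * cos v) := by
        congr 1
        rw [intervalIntegral.integral_of_le hρ0, integral_Ioc_eq_integral_Ioo]
        refine setIntegral_congr_fun measurableSet_Ioo fun τ _ => ?_
        rw [intervalIntegral.integral_of_le (by linarith : -(π/2) ≤ π/2),
          integral_Ioc_eq_integral_Ioo]

end
end

section
/- If ρ ≥ π, then there exists v ∈ [−π/2, π/2] and τ ∈ (0, ρ] with τ cos v = π, so that the geodesic sphere parametrization y(τ, v, u) = e^{τ sin v} sin(τ cos v) cos u and z(τ, v, u) = e^{τ sin v} sin(τ cos v) sin u satisfies y = z = 0 at a point with τ > 0; hence the geodesic sphere of radius ρ ≥ π is not an embedded (self-intersection-free) surface. Conversely, for ρ ∈ (0, π) the map (v, u) ↦ (x(ρ,v), y(ρ,v,u), z(ρ,v,u)) restricted to v ∈ (−π/2, π/2), u ∈ (−π, π] is injective. -/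
/-!
STATEMENT 9: If ρ ≥ π then there exist v ∈ [−π/2, π/2] and τ ∈ (0, ρ] with
τ cos v = π, where sin(τ cos v) = 0, so the geodesic sphere parametrization
satisfies y = z = 0 at a point with τ > 0 (self-intersection). Conversely,
for ρ ∈ (0, π) the map (v, u) ↦ (x(ρ,v), y(ρ,v,u), z(ρ,v,u)) restricted to
v ∈ (−π/2, π/2), u ∈ (−π, π] is injective.
-/

noncomputable section
open Real

/-- Parametrization of the geodesic sphere of radius ρ:
(v, u) ↦ (x, y, z). -/
def sphereMap (ρ : ℝ) (p : ℝ × ℝ) : ℝ × ℝ × ℝ :=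
  (exp (ρ * sin p.1) * cos (ρ * cos p.1),
   exp (ρ * sin p.1) * sin (ρ * cos p.1) * cos p.2,
   exp (ρ * sin p.1) * sin (ρ * cos p.1) * sin p.2)

lemma sq_cancel_pos {a b : ℝ} (ha : 0 < a) (hb : 0 < b) (h : a ^ 2 = b ^ 2) : a = b := by
  rw [← abs_of_pos ha, ← abs_of_pos hb, ← Real.sqrt_sq_eq_abs, ← Real.sqrt_sq_eq_abs, h]

theorem stmt9 :
    -- self-intersection for ρ ≥ π
    (∀ ρ : ℝ, π ≤ ρ →
      ∃ v ∈ Set.Icc (-(π/2)) (π/2), ∃ τ ∈ Set.Ioc (0 : ℝ) ρ,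
        τ * cos v = π ∧
        ∀ u : ℝ, (exp (τ * sin v) * sin (τ * cos v) * cos u = 0 ∧
                  exp (τ * sin v) * sin (τ * cos v) * sin u = 0)) ∧
    -- injectivity for 0 < ρ < π
    (∀ ρ : ℝ, ρ ∈ Set.Ioo 0 π →
      Set.InjOn (sphereMap ρ) (Set.Ioo (-(π/2)) (π/2) ×ˢ Set.Ioc (-π) π)) := by
  constructor
  · intro ρ hρ
    refine ⟨0, ?_, π, ⟨pi_pos, hρ⟩, ?_, ?_⟩
    · constructor <;> [linarith [pi_pos]; linarith [pi_pos]]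
    · simp
    · intro u
      simp
  · intro ρ hρ
    rintro ⟨v₁, u₁⟩ ⟨hv₁, hu₁⟩ ⟨v₂, u₂⟩ ⟨hv₂, hu₂⟩ h
    simp only [sphereMap, Prod.mk.injEq] at h
    obtain ⟨hx, hy, hz⟩ := h
    obtain ⟨hρ0, hρπ⟩ := hρ
    simp only [Set.mem_Ioo, Set.mem_Ioc] at hv₁ hv₂ hu₁ hu₂
    have hc₁ : 0 < cos v₁ := cos_pos_of_mem_Ioo ⟨by linarith [hv₁.1], hv₁.2⟩
    have hc₂ : 0 < cos v₂ := cos_pos_of_mem_Ioo ⟨by linarith [hv₂.1], hv₂.2⟩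
    have hθ₁ : 0 < ρ * cos v₁ ∧ ρ * cos v₁ < π :=
      ⟨by positivity, by nlinarith [cos_le_one v₁]⟩
    have hθ₂ : 0 < ρ * cos v₂ ∧ ρ * cos v₂ < π :=
      ⟨by positivity, by nlinarith [cos_le_one v₂]⟩
    have hs₁ : 0 < sin (ρ * cos v₁) := sin_pos_of_pos_of_lt_pi hθ₁.1 hθ₁.2
    have hs₂ : 0 < sin (ρ * cos v₂) := sin_pos_of_pos_of_lt_pi hθ₂.1 hθ₂.2
    have he₁ : 0 < exp (ρ * sin v₁) := exp_pos _
    have he₂ : 0 < exp (ρ * sin v₂) := exp_pos _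
    have ha₁pos : 0 < exp (ρ * sin v₁) * sin (ρ * cos v₁) := mul_pos he₁ hs₁
    have ha₂pos : 0 < exp (ρ * sin v₂) * sin (ρ * cos v₂) := mul_pos he₂ hs₂
    have hsq : (exp (ρ * sin v₁) * sin (ρ * cos v₁)) ^ 2
        = (exp (ρ * sin v₂) * sin (ρ * cos v₂)) ^ 2 := by
      have h1 : (exp (ρ * sin v₁) * sin (ρ * cos v₁) * cos u₁) ^ 2
          + (exp (ρ * sin v₁) * sin (ρ * cos v₁) * sin u₁) ^ 2
          = (exp (ρ * sin v₂) * sin (ρ * cos v₂) * cos u₂) ^ 2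
          + (exp (ρ * sin v₂) * sin (ρ * cos v₂) * sin u₂) ^ 2 := by rw [hy, hz]
      linear_combination h1
        - (exp (ρ * sin v₁) * sin (ρ * cos v₁)) ^ 2 * sin_sq_add_cos_sq u₁
        + (exp (ρ * sin v₂) * sin (ρ * cos v₂)) ^ 2 * sin_sq_add_cos_sq u₂
    have ha : exp (ρ * sin v₁) * sin (ρ * cos v₁)
        = exp (ρ * sin v₂) * sin (ρ * cos v₂) := sq_cancel_pos ha₁pos ha₂pos hsq
    have hesq : exp (ρ * sin v₁) ^ 2 = exp (ρ * sin v₂) ^ 2 := by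
      have h1 : (exp (ρ * sin v₁) * cos (ρ * cos v₁)) ^ 2
          + (exp (ρ * sin v₁) * sin (ρ * cos v₁)) ^ 2
          = (exp (ρ * sin v₂) * cos (ρ * cos v₂)) ^ 2
          + (exp (ρ * sin v₂) * sin (ρ * cos v₂)) ^ 2 := by rw [hx, ha]
      linear_combination h1
        - exp (ρ * sin v₁) ^ 2 * sin_sq_add_cos_sq (ρ * cos v₁)
        + exp (ρ * sin v₂) ^ 2 * sin_sq_add_cos_sq (ρ * cos v₂)
    have he : exp (ρ * sin v₁) = exp (ρ * sin v₂) := sq_cancel_pos he₁ he₂ hesq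
    have hsv : sin v₁ = sin v₂ :=
      mul_left_cancel₀ (ne_of_gt hρ0) (exp_injective he)
    have hv : v₁ = v₂ :=
      injOn_sin ⟨le_of_lt hv₁.1, le_of_lt hv₁.2⟩ ⟨le_of_lt hv₂.1, le_of_lt hv₂.2⟩ hsv
    subst hv
    have hcu : cos u₁ = cos u₂ := mul_left_cancel₀ (ne_of_gt ha₁pos) hy
    have hsu : sin u₁ = sin u₂ := mul_left_cancel₀ (ne_of_gt ha₁pos) hz
    have hcos1 : cos (u₁ - u₂) = 1 := by
      rw [cos_sub, hcu, hsu, ← sin_sq_add_cos_sq u₂]; ring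
    have h0 : u₁ - u₂ = 0 :=
      (cos_eq_one_iff_of_lt_of_lt (by linarith [hu₁.1, hu₂.2])
        (by linarith [hu₁.2, hu₂.1])).mp hcos1
    have hu : u₁ = u₂ := by linarith
    rw [hu]

end
end
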